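/- The map f preserves Lebesgue measure on [0, √2): f is Lebesgue measurable, and the pushforward under f of Lebesgue measure restricted to [0, √2) equals Lebesgue measure restricted to [0, √2); equivalently, for every Borel set A ⊆ [0, √2), the Lebesgue measure of f⁻¹(A) ∩ [0, √2) equals the Lebesgue measure of A. -/
import Mathlib


noncomputable section

/-- `β = √2 - 1`. -/
def β : ℝ := Real.sqrt 2 - 1

/-- `ω = √2 + 1`. -/
def ω : ℝ := Real.sqrt 2 + 1

/-- The break points `Δ_i`. -/
def Δ (i : ℤ) : ℝ :=
  if i < 0 then β ^ i.natAbs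
  else if i = 0 then β
  else Real.sqrt 2 - β ^ i.natAbs

/-- The intervals `I_i`. -/
def Iint (i : ℤ) : Set ℝ :=
  if i < 0 then Set.Ioc (Δ (i - 1)) (Δ i)
  else if i = 0 then Set.Ioo β 1
  else Set.Ico (Δ i) (Δ (i + 1))

/-- The defining formula of `f` on the interval `I_i`. -/
def fval (i : ℤ) (s : ℝ) : ℝ :=
  if i < 0 then ω ^ (i.natAbs + 1) * (Δ i - s)
  else if i = 0 then ω * (s - β)
  else ω ^ (i.natAbs + 1) * (s - Δ i)

/-- `f` is the renormalization map: `f 0 = f √2 = 0` and on each interval `I_i`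
    it is given by the corresponding affine formula. These conditions determine
    `f` uniquely on `[0, √2]`. -/
def IsLuroth (f : ℝ → ℝ) : Prop :=
  f 0 = 0 ∧ f (Real.sqrt 2) = 0 ∧ ∀ i : ℤ, ∀ s ∈ Iint i, f s = fval i s

/-- `ℚ(√2)` as a subset of `ℝ`. -/
def QSqrt2 : Set ℝ := {x | ∃ a b : ℚ, x = (a : ℝ) + (b : ℝ) * Real.sqrt 2}

/-- `ℤ[√2]` as a subset of `ℝ`. -/
def ZSqrt2 : Set ℝ := {x | ∃ m n : ℤ, x = (m : ℝ) + (n : ℝ) * Real.sqrt 2}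

/-- `M_d = {s ∈ [0,√2] : d·s ∈ ℤ[√2]}`. -/
def Mset (d : ℤ) : Set ℝ :=
  {s | s ∈ Set.Icc 0 (Real.sqrt 2) ∧ (d : ℝ) * s ∈ ZSqrt2}

open MeasureTheory

lemma sqrt2_mul_self : Real.sqrt 2 * Real.sqrt 2 = 2 := Real.mul_self_sqrt (by norm_num)
lemma one_lt_sqrt2 : 1 < Real.sqrt 2 := by nlinarith [sqrt2_mul_self, Real.sqrt_nonneg 2]
lemma sqrt2_lt_two : Real.sqrt 2 < 2 := by nlinarith [sqrt2_mul_self, Real.sqrt_nonneg 2]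
lemma βpos : 0 < β := by unfold β; linarith [one_lt_sqrt2]
lemma βlt1 : β < 1 := by unfold β; linarith [sqrt2_lt_two]
lemma ωpos : 0 < ω := by unfold ω; linarith [one_lt_sqrt2]
lemma βω : β * ω = 1 := by unfold β ω; nlinarith [sqrt2_mul_self]
lemma βω_pow (k : ℕ) : β ^ k * ω ^ k = 1 := by rw [← mul_pow, βω, one_pow]
lemma one_sub_β : 1 - β = Real.sqrt 2 * β := by unfold β; nlinarith [sqrt2_mul_self]
lemma β_gap (m : ℕ) : β ^ m - β ^ (m + 1) = Real.sqrt 2 * β ^ (m + 1) := by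
  have h := one_sub_β
  have : β ^ m * (1 - β) = β ^ m * (Real.sqrt 2 * β) := by rw [h]
  calc β ^ m - β ^ (m+1) = β ^ m * (1 - β) := by ring
    _ = β ^ m * (Real.sqrt 2 * β) := this
    _ = Real.sqrt 2 * β ^ (m+1) := by ring

open scoped ENNReal

/-- Left endpoint of `Iint i`. -/
def Dpt (i : ℤ) : ℝ := if i ≤ 0 then β ^ (1 - i).toNat else Real.sqrt 2 - β ^ i.toNat

lemma sqrt2_sub_β : Real.sqrt 2 - β = 1 := by unfold β; ring

lemma Dpt_lt_succ (i : ℤ) : Dpt i < Dpt (i + 1) := by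
  unfold Dpt
  rcases lt_trichotomy i 0 with hi | hi | hi
  · rw [if_pos hi.le, if_pos (by omega)]
    have h1 : (1 - i).toNat = (1 - (i+1)).toNat + 1 := by omega
    rw [h1]
    exact pow_lt_pow_right_of_lt_one₀ βpos βlt1 (by omega)
  · subst hi
    simp only [if_pos le_rfl, if_neg (by omega : ¬ (0:ℤ)+1 ≤ 0)]
    norm_num
    linarith [sqrt2_sub_β, βlt1]
  · rw [if_neg (by omega), if_neg (by omega)]
    have h1 : (i+1).toNat = i.toNat + 1 := by omega
    rw [h1]
    have := pow_lt_pow_right_of_lt_one₀ βpos βlt1 (by omega : i.toNat < i.toNat + 1)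
    linarith

lemma Dpt_mono : StrictMono Dpt := strictMono_int_of_lt_succ Dpt_lt_succ

lemma Dpt_pos (i : ℤ) : 0 < Dpt i := by
  unfold Dpt
  split
  · exact pow_pos βpos _
  · rename_i h
    have h1 : 1 ≤ i.toNat := by omega
    have : β ^ i.toNat ≤ β ^ 1 := pow_le_pow_of_le_one βpos.le βlt1.le h1
    simp only [pow_one] at this
    nlinarith [βpos, βlt1, one_lt_sqrt2]

lemma Dpt_lt_sqrt2 (i : ℤ) : Dpt i < Real.sqrt 2 := by
  unfold Dpt
  split
  · rename_i h
    have h1 : 1 ≤ (1 - i).toNat := by omega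
    have : β ^ (1-i).toNat ≤ β ^ 1 := pow_le_pow_of_le_one βpos.le βlt1.le h1
    simp only [pow_one] at this
    nlinarith [βlt1, one_lt_sqrt2]
  · have : 0 < β ^ i.toNat := pow_pos βpos _
    linarith

lemma Iint_left {i : ℤ} {x : ℝ} (hx : x ∈ Iint i) : Dpt i ≤ x ∧ (i ≤ 0 → Dpt i < x) := by
  rcases lt_trichotomy i 0 with h | h | h
  · rw [Iint, if_pos h] at hx
    have hD : Dpt i = Δ (i - 1) := by
      unfold Dpt Δ
      rw [if_pos (by omega), if_pos (by omega)]
      congr 1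
      omega
    rw [hD]
    exact ⟨hx.1.le, fun _ => hx.1⟩
  · subst h
    rw [Iint, if_neg (by omega), if_pos rfl] at hx
    have hD : Dpt 0 = β := by unfold Dpt; rw [if_pos le_rfl]; norm_num
    rw [hD]
    exact ⟨hx.1.le, fun _ => hx.1⟩
  · rw [Iint, if_neg (by omega), if_neg (by omega)] at hx
    have hD : Dpt i = Δ i := by
      unfold Dpt Δ
      rw [if_neg (by omega), if_neg (by omega), if_neg (by omega)]
      congr 2
      omega
    rw [hD]
    exact ⟨hx.1, fun hle => absurd hle (by omega)⟩

lemma Iint_right {i : ℤ} {x : ℝ} (hx : x ∈ Iint i) : x ≤ Dpt (i + 1) ∧ (0 ≤ i → x < Dpt (i + 1)) := by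
  rcases lt_trichotomy i 0 with h | h | h
  · rw [Iint, if_pos h] at hx
    have hD : Dpt (i + 1) = Δ i := by
      unfold Dpt Δ
      rw [if_pos (by omega), if_pos h]
      congr 1
      omega
    rw [hD]
    exact ⟨hx.2, fun hle => absurd hle (by omega)⟩
  · subst h
    rw [Iint, if_neg (by omega), if_pos rfl] at hx
    have hD : Dpt 1 = 1 := by
      unfold Dpt
      rw [if_neg (by omega)]
      simpa using sqrt2_sub_β
    rw [show (0:ℤ)+1 = 1 from rfl, hD]
    exact ⟨hx.2.le, fun _ => hx.2⟩
  · rw [Iint, if_neg (by omega), if_neg (by omega)] at hx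
    have hD : Dpt (i + 1) = Δ (i + 1) := by
      unfold Dpt Δ
      rw [if_neg (by omega), if_neg (by omega), if_neg (by omega)]
      congr 2
      omega
    rw [hD]
    exact ⟨hx.2.le, fun _ => hx.2⟩

lemma Iint_disjoint : Pairwise (Function.onFun Disjoint Iint) := by
  have key : ∀ i j : ℤ, i < j → Disjoint (Iint i) (Iint j) := by
    intro i j hij
    rw [Set.disjoint_left]
    intro x hxi hxj
    have h1 := Iint_right hxi
    have h2 := Iint_left hxj
    have hle : Dpt (i + 1) ≤ Dpt j := Dpt_mono.le_iff_le.mpr (by omega)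
    rcases lt_or_ge i 0 with hi | hi
    · rcases lt_or_ge j 0 with hj | hj
      · have := h2.2 (by omega)
        linarith [h1.1]
      · -- j ≥ 0, i < 0 : if i + 1 < j strict mono; if i+1 = j then j ≤ 0? no...
        rcases eq_or_lt_of_le (by omega : i + 1 ≤ j) with he | hlt
        · -- i + 1 = j ≥ 0; if j = 0 then i ≤ -1, i+1 = 0 = j, need one strict:
          rcases eq_or_lt_of_le hj with hj0 | hj0
          · have := h2.2 (by omega)
            rw [← he] at this
            linarith [h1.1]
          · exact absurd he (by omega)
        · have := Dpt_mono hlt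
          linarith [h1.1, h2.1]
    · have := h1.2 (by omega)
      rcases eq_or_lt_of_le (by omega : i + 1 ≤ j) with he | hlt
      · rw [he] at this; linarith [h2.1]
      · have h3 := Dpt_mono hlt
        linarith [h2.1]
  intro i j hij
  rcases lt_or_gt_of_ne hij with h | h
  · exact key i j h
  · exact (key j i h).symm

lemma Iint_subset (i : ℤ) : Iint i ⊆ Set.Ioo 0 (Real.sqrt 2) := by
  intro x hx
  have h1 := Iint_left hx
  have h2 := Iint_right hx
  constructor
  · rcases le_or_gt i 0 with h | h
    · linarith [Dpt_pos i, h1.2 h]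
    · linarith [Dpt_pos i, h1.1]
  · rcases le_or_gt 0 i with h | h
    · linarith [Dpt_lt_sqrt2 (i+1), h2.2 h]
    · linarith [Dpt_lt_sqrt2 (i+1), h2.1]

/-- for `0 < t ≤ β` there is `n ≥ 1` with `β^(n+1) < t ≤ β^n` -/
lemma exists_pow_interval {t : ℝ} (ht : 0 < t) (htβ : t ≤ β) :
    ∃ n : ℕ, 1 ≤ n ∧ β ^ (n + 1) < t ∧ t ≤ β ^ n := by
  have hex : ∃ m : ℕ, β ^ m < t := exists_pow_lt_of_lt_one ht βlt1
  classical
  let n₀ := Nat.find hex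
  have hn₀ : β ^ n₀ < t := Nat.find_spec hex
  have h2 : 2 ≤ n₀ := by
    by_contra h
    interval_cases n₀ <;> simp_all <;> linarith [βlt1]
  refine ⟨n₀ - 1, by omega, ?_, ?_⟩
  · have : n₀ - 1 + 1 = n₀ := by omega
    rw [this]; exact hn₀
  · have := Nat.find_min hex (show n₀ - 1 < n₀ by omega)
    linarith [not_lt.mp this]

lemma cover {x : ℝ} (hx : x ∈ Set.Ico (0:ℝ) (Real.sqrt 2)) :
    x = 0 ∨ ∃ i : ℤ, x ∈ Iint i := by
  obtain ⟨hx0, hx2⟩ := hx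
  rcases eq_or_lt_of_le hx0 with h0 | h0
  · exact Or.inl h0.symm
  right
  rcases le_or_gt x β with hxβ | hxβ
  · -- negative index
    obtain ⟨n, hn1, hlt, hle⟩ := exists_pow_interval h0 hxβ
    refine ⟨-(n:ℤ), ?_⟩
    rw [Iint, if_pos (by omega)]
    have e1 : Δ (-(n:ℤ) - 1) = β ^ (n+1) := by
      rw [Δ, if_pos (by omega)]
      congr 1
      omega
    have e2 : Δ (-(n:ℤ)) = β ^ n := by
      rw [Δ, if_pos (by omega)]
      congr 1
      omega
    rw [e1, e2]
    exact ⟨hlt, hle⟩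
  · rcases lt_or_ge x 1 with hx1 | hx1
    · exact ⟨0, by rw [Iint, if_neg (by omega), if_pos rfl]; exact ⟨hxβ, hx1⟩⟩
    · -- positive index
      have ht : 0 < Real.sqrt 2 - x := by linarith
      have htβ : Real.sqrt 2 - x ≤ β := by linarith [sqrt2_sub_β]
      obtain ⟨n, hn1, hlt, hle⟩ := exists_pow_interval ht htβ
      refine ⟨(n:ℤ), ?_⟩
      rw [Iint, if_neg (by omega), if_neg (by omega)]
      have e1 : Δ (n:ℤ) = Real.sqrt 2 - β ^ n := by
        rw [Δ, if_neg (by omega), if_neg (by omega)]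
        congr 2 <;> omega
      have e2 : Δ ((n:ℤ) + 1) = Real.sqrt 2 - β ^ (n+1) := by
        rw [Δ, if_neg (by omega), if_neg (by omega)]
        congr 2 <;> omega
      rw [e1, e2]
      constructor <;> [linarith; linarith]

open MeasureTheory
open scoped ENNReal

lemma affine_vol (c d : ℝ) (hc : c ≠ 0) (A : Set ℝ) :
    volume ((fun s => c * (s - d)) ⁻¹' A) = ENNReal.ofReal |c⁻¹| * volume A := by
  have hfun : (fun s : ℝ => c * (s - d)) = (fun s : ℝ => c * s) ∘ (fun s : ℝ => s + (-d)) := by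
    funext s; simp only [Function.comp]; ring
  rw [hfun, Set.preimage_comp]
  rw [measure_preimage_add_right volume (-d) _]
  exact Real.volume_preimage_mul_left hc A

lemma fval_measurable (i : ℤ) : Measurable (fval i) := by
  unfold fval
  split
  · exact (measurable_const.sub measurable_id).const_mul _
  · split
    · exact (measurable_id.sub measurable_const).const_mul _
    · exact (measurable_id.sub measurable_const).const_mul _

lemma abs_inv_ω_pow (k : ℕ) : |((ω : ℝ) ^ k)⁻¹| = β ^ k := by
  have hω : (0:ℝ) < ω ^ k := pow_pos ωpos k
  rw [abs_of_pos (inv_pos.mpr hω)]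
  field_simp
  nlinarith [βω_pow k]

lemma interval_vol (i : ℤ) (A : Set ℝ) (hA : A ⊆ Set.Ico 0 (Real.sqrt 2)) :
    volume (fval i ⁻¹' A ∩ Iint i) = ENNReal.ofReal (β ^ (i.natAbs + 1)) * volume A := by
  have hsq := sqrt2_mul_self
  rcases lt_trichotomy i 0 with hi | hi | hi
  · -- negative case
    obtain ⟨n, rfl⟩ : ∃ n : ℕ, i = -(n:ℤ) := ⟨i.natAbs, by omega⟩
    have hn : 1 ≤ n := by omega
    have hna : (-(n:ℤ)).natAbs = n := by omega
    have eΔ : Δ (-(n:ℤ)) = β ^ n := by rw [Δ, if_pos hi]; congr 1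
    have eΔ' : Δ (-(n:ℤ) - 1) = β ^ (n+1) := by
      rw [Δ, if_pos (by omega)]; congr 1; omega
    have hfv : fval (-(n:ℤ)) = fun s => (-(ω ^ (n+1))) * (s - β ^ n) := by
      funext s
      rw [fval, if_pos hi, eΔ, hna]
      ring
    have hpre : fval (-(n:ℤ)) ⁻¹' A ⊆ Iint (-(n:ℤ)) := by
      intro s hs
      rw [hfv] at hs
      obtain ⟨h0, h2⟩ := hA hs
      dsimp only at h0 h2
      rw [Iint, if_pos hi, eΔ, eΔ']
      have hb : (0:ℝ) < β ^ (n+1) := pow_pos βpos _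
      have hmul := βω_pow (n+1)
      constructor
      · -- β^(n+1) < s
        have h3 := mul_lt_mul_of_pos_left h2 hb
        have e : β ^ (n+1) * (-ω ^ (n+1) * (s - β ^ n)) = (β ^ n - s) * (β ^ (n+1) * ω ^ (n+1)) := by
          ring
        rw [e, hmul, mul_one] at h3
        have hgap := β_gap n
        linarith
      · nlinarith [pow_pos ωpos (n+1)]
    rw [Set.inter_eq_left.mpr hpre, hfv,
      affine_vol _ _ (neg_ne_zero.mpr (ne_of_gt (pow_pos ωpos (n+1)))) A]
    rw [inv_neg, abs_neg, abs_inv_ω_pow, hna]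
  · -- zero case
    subst hi
    have hfv : fval 0 = fun s => ω * (s - β) := by
      funext s; rw [fval, if_neg (by omega), if_pos rfl]
    have hpre : fval 0 ⁻¹' A ⊆ Set.Ico β 1 := by
      intro s hs
      rw [hfv] at hs
      obtain ⟨h0, h2⟩ := hA hs
      dsimp only at h0 h2
      constructor
      · nlinarith [ωpos]
      · -- ω(s-β) < √2 ⇒ s < 1
        nlinarith [βω, βpos, one_sub_β]
    have hIint : Iint 0 = Set.Ioo β 1 := by rw [Iint, if_neg (by omega), if_pos rfl]
    have hinter : fval 0 ⁻¹' A ∩ Iint 0 = fval 0 ⁻¹' A \ {β} := by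
      rw [hIint]
      ext s
      simp only [Set.mem_inter_iff, Set.mem_Ioo, Set.mem_diff, Set.mem_singleton_iff]
      constructor
      · rintro ⟨hs, h1, h2⟩; exact ⟨hs, by intro h; rw [h] at h1; exact lt_irrefl _ h1⟩
      · rintro ⟨hs, hne⟩
        have := hpre hs
        exact ⟨hs, lt_of_le_of_ne this.1 (Ne.symm hne), this.2⟩
    rw [hinter, measure_diff_null (measure_singleton β), hfv,
      affine_vol _ _ (ne_of_gt ωpos) A]
    have : |ω⁻¹| = β := by simpa using abs_inv_ω_pow 1
    rw [this]
    norm_num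
  · -- positive case
    lift i to ℕ using hi.le with n
    have hn : 1 ≤ n := by omega
    have hna : ((n:ℤ)).natAbs = n := by omega
    have eΔ : Δ (n:ℤ) = Real.sqrt 2 - β ^ n := by
      rw [Δ, if_neg (by omega), if_neg (by omega)]; congr 2
    have eΔ' : Δ ((n:ℤ) + 1) = Real.sqrt 2 - β ^ (n+1) := by
      rw [Δ, if_neg (by omega), if_neg (by omega)]; congr 2 <;> omega
    have hfv : fval (n:ℤ) = fun s => (ω ^ (n+1)) * (s - (Real.sqrt 2 - β ^ n)) := by
      funext s
      rw [fval, if_neg (by omega), if_neg (by omega), eΔ, hna]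
    have hpre : fval (n:ℤ) ⁻¹' A ⊆ Iint (n:ℤ) := by
      intro s hs
      rw [hfv] at hs
      obtain ⟨h0, h2⟩ := hA hs
      dsimp only at h0 h2
      rw [Iint, if_neg (by omega), if_neg (by omega), eΔ, eΔ']
      have hb : (0:ℝ) < β ^ (n+1) := pow_pos βpos _
      have hmul := βω_pow (n+1)
      constructor
      · nlinarith [pow_pos ωpos (n+1)]
      · have h3 := mul_lt_mul_of_pos_left h2 hb
        have e : β ^ (n+1) * (ω ^ (n+1) * (s - (Real.sqrt 2 - β ^ n)))
            = (s - (Real.sqrt 2 - β ^ n)) * (β ^ (n+1) * ω ^ (n+1)) := by ring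
        rw [e, hmul, mul_one] at h3
        have hgap := β_gap n
        linarith
    rw [Set.inter_eq_left.mpr hpre, hfv, affine_vol _ _ (ne_of_gt (pow_pos ωpos (n+1))) A]
    rw [abs_inv_ω_pow, hna]

lemma tsum_beta : ∑' i : ℤ, ENNReal.ofReal (β ^ (i.natAbs + 1)) = 1 := by
  set b : ℝ≥0∞ := ENNReal.ofReal β with hb
  have hofp : ∀ k : ℕ, ENNReal.ofReal (β ^ k) = b ^ k := fun k =>
    ENNReal.ofReal_pow βpos.le k
  have hsplit := tsum_of_nat_of_neg_add_one
    (f := fun i : ℤ => ENNReal.ofReal (β ^ (i.natAbs + 1)))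
    ENNReal.summable ENNReal.summable
  rw [hsplit]
  have e1 : ∀ n : ℕ, ENNReal.ofReal (β ^ (((n:ℤ)).natAbs + 1)) = b ^ (n+1) := by
    intro n
    rw [← hofp]
    congr 2 <;> omega
  have e2 : ∀ n : ℕ, ENNReal.ofReal (β ^ ((-(n:ℤ) - 1).natAbs + 1)) = b ^ (n+2) := by
    intro n
    rw [← hofp]
    congr 2 <;> omega
  calc (∑' n : ℕ, ENNReal.ofReal (β ^ (((n:ℤ)).natAbs + 1)))
        + ∑' n : ℕ, ENNReal.ofReal (β ^ ((-((n:ℤ) + 1)).natAbs + 1))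
      = (∑' n : ℕ, b ^ (n+1)) + ∑' n : ℕ, b ^ (n+2) := by
        congr 1
        · exact tsum_congr e1
        · refine tsum_congr fun n => ?_
          rw [show -((n:ℤ) + 1) = -(n:ℤ) - 1 by ring]
          exact e2 n
    _ = b * (1 - b)⁻¹ + b ^ 2 * (1 - b)⁻¹ := by
        rw [ENNReal.tsum_geometric_add_one]
        congr 1
        have : ∀ n : ℕ, b ^ (n + 2) = b ^ 2 * b ^ n := fun n => by ring
        rw [tsum_congr this, ENNReal.tsum_mul_left, ENNReal.tsum_geometric]
    _ = (b + b ^ 2) * (1 - b)⁻¹ := by ring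
    _ = (1 - b) * (1 - b)⁻¹ := by
        congr 1
        have h1 : b + b ^ 2 = ENNReal.ofReal (β + β ^ 2) := by
          rw [ENNReal.ofReal_add βpos.le (by positivity), hb, ENNReal.ofReal_pow βpos.le]
        have h2 : (1:ℝ≥0∞) - b = ENNReal.ofReal (1 - β) := by
          rw [ENNReal.ofReal_sub _ βpos.le, ENNReal.ofReal_one]
        rw [h1, h2]
        congr 1
        unfold β
        nlinarith [sqrt2_mul_self]
    _ = 1 := by
        refine ENNReal.mul_inv_cancel ?_ ?_
        · simp only [ne_eq, tsub_eq_zero_iff_le, not_le]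
          exact lt_of_lt_of_le (ENNReal.ofReal_lt_one.mpr βlt1) le_rfl
        · exact ne_top_of_le_ne_top ENNReal.one_ne_top tsub_le_self

lemma decomposition {f : ℝ → ℝ} (hf : IsLuroth f) (B : Set ℝ) :
    f ⁻¹' B ∩ Set.Ico (0:ℝ) (Real.sqrt 2)
      = (f ⁻¹' B ∩ {0}) ∪ ⋃ i : ℤ, (fval i ⁻¹' B ∩ Iint i) := by
  ext x
  simp only [Set.mem_inter_iff, Set.mem_union, Set.mem_iUnion, Set.mem_preimage,
    Set.mem_singleton_iff]
  constructor
  · rintro ⟨hxB, hx⟩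
    rcases cover hx with h0 | ⟨i, hi⟩
    · exact Or.inl ⟨hxB, h0⟩
    · exact Or.inr ⟨i, by rwa [← hf.2.2 i x hi], hi⟩
  · rintro (⟨hxB, h0⟩ | ⟨i, hfB, hi⟩)
    · subst h0
      exact ⟨hxB, le_rfl, Real.sqrt_pos.mpr (by norm_num)⟩
    · have hx := Iint_subset i hi
      exact ⟨by rwa [hf.2.2 i x hi], hx.1.le, hx.2⟩

lemma Iint_measurableSet (i : ℤ) : MeasurableSet (Iint i) := by
  unfold Iint
  split
  · exact measurableSet_Ioc
  · split
    · exact measurableSet_Ioo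
    · exact measurableSet_Ico

/-- `f` preserves Lebesgue measure on `[0,√2)`: the restriction
of `f` to `[0,√2)` is measurable and, for every Borel set `A ⊆ [0,√2)`,
the Lebesgue measure of `f⁻¹(A) ∩ [0,√2)` equals that of `A`. -/
theorem luroth_measure_preserving (f : ℝ → ℝ) (hf : IsLuroth f) :
    Measurable ((Set.Ico (0 : ℝ) (Real.sqrt 2)).restrict f) ∧
    ∀ A : Set ℝ, MeasurableSet A → A ⊆ Set.Ico (0 : ℝ) (Real.sqrt 2) →
      volume (f ⁻¹' A ∩ Set.Ico (0 : ℝ) (Real.sqrt 2)) = volume A := by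
  have key : ∀ B : Set ℝ, MeasurableSet B →
      MeasurableSet (f ⁻¹' B ∩ Set.Ico (0:ℝ) (Real.sqrt 2)) := by
    intro B hB
    rw [decomposition hf B]
    refine MeasurableSet.union ?_ (MeasurableSet.iUnion fun i => ?_)
    · exact ((Set.countable_singleton (0:ℝ)).mono Set.inter_subset_right).measurableSet
    · exact ((fval_measurable i) hB).inter (Iint_measurableSet i)
  constructor
  · intro t ht
    have h1 : (Set.Ico (0:ℝ) (Real.sqrt 2)).restrict f ⁻¹' t
        = Subtype.val ⁻¹' (f ⁻¹' t ∩ Set.Ico (0:ℝ) (Real.sqrt 2)) := by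
      ext x
      simp only [Set.restrict_apply, Set.mem_preimage, Set.mem_inter_iff]
      exact ⟨fun h => ⟨h, x.2⟩, fun h => h.1⟩
    rw [h1]
    exact measurable_subtype_coe (key t ht)
  · intro A hA hAsub
    rw [decomposition hf A]
    have hnull : volume (f ⁻¹' A ∩ ({0} : Set ℝ)) = 0 :=
      measure_mono_null Set.inter_subset_right (measure_singleton 0)
    have hu : volume ((f ⁻¹' A ∩ {0}) ∪ ⋃ i : ℤ, (fval i ⁻¹' A ∩ Iint i))
        = volume (⋃ i : ℤ, (fval i ⁻¹' A ∩ Iint i)) := by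
      refine le_antisymm ?_ (measure_mono Set.subset_union_right)
      calc volume ((f ⁻¹' A ∩ {0}) ∪ ⋃ i : ℤ, (fval i ⁻¹' A ∩ Iint i))
          ≤ volume (f ⁻¹' A ∩ {0}) + volume (⋃ i : ℤ, (fval i ⁻¹' A ∩ Iint i)) :=
            measure_union_le _ _
        _ = volume (⋃ i : ℤ, (fval i ⁻¹' A ∩ Iint i)) := by rw [hnull, zero_add]
    rw [hu]
    rw [measure_iUnion
      (fun i j hij => ((Iint_disjoint hij).mono Set.inter_subset_right Set.inter_subset_right))
      (fun i => ((fval_measurable i) hA).inter (Iint_measurableSet i))]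
    calc ∑' i : ℤ, volume (fval i ⁻¹' A ∩ Iint i)
        = ∑' i : ℤ, ENNReal.ofReal (β ^ (i.natAbs + 1)) * volume A :=
          tsum_congr fun i => interval_vol i A hAsub
      _ = (∑' i : ℤ, ENNReal.ofReal (β ^ (i.natAbs + 1))) * volume A :=
          ENNReal.tsum_mul_right
      _ = volume A := by rw [tsum_beta, one_mul]
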